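/- Every prime divisor of ω divides n. -/

import Mathlib

open Module

/-- The endomorphism `F - 1` of `N`. -/
def frobSub {N : Type*} [AddCommGroup N] (F : AddAut N) : N →+ N :=
  AddEquiv.toAddMonoidHom (F : N ≃+ N) - AddMonoidHom.id N

/-- The invariants `N^F = ker (F - 1)`. -/
def invariantsOf {N : Type*} [AddCommGroup N] (F : AddAut N) : AddSubgroup N :=
  (frobSub F).ker

/-- The coinvariants `N_F = N / im (F - 1)`. -/
abbrev coinvariantsOf {N : Type*} [AddCommGroup N] (F : AddAut N) :=
  N ⧸ (frobSub F).range

/-- The map `β : N^F → N_F` induced by the identity of `N`. -/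
def betaHom {N : Type*} [AddCommGroup N] (F : AddAut N) :
    ↥(invariantsOf F) →+ coinvariantsOf F :=
  (QuotientAddGroup.mk' (frobSub F).range).comp (invariantsOf F).subtype

/-- The cokernel of `β`. -/
abbrev betaCoker {N : Type*} [AddCommGroup N] (F : AddAut N) :=
  coinvariantsOf F ⧸ (betaHom F).range

/-- `ω = |coker β| / |ker β|`. -/
noncomputable def omegaOf {N : Type*} [AddCommGroup N] (F : AddAut N) : ℕ :=
  Nat.card (betaCoker F) / Nat.card ↥(betaHom F).ker

/-- `τ = rank N - rank N^F`. -/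
noncomputable def tauOf {N : Type*} [AddCommGroup N] (F : AddAut N) : ℕ :=
  Module.finrank ℤ N - Module.finrank ℤ ↥(invariantsOf F)

section Aux

variable {N : Type*} [AddCommGroup N] (F : AddAut N)

lemma frobSub_apply (x : N) : frobSub F x = F x - x := rfl

lemma pow_sub_mem_range (i : ℕ) (x : N) : (i • F) x - x ∈ (frobSub F).range := by
  induction i generalizing x with
  | zero => simpa using (frobSub F).range.zero_mem
  | succ i ih =>
    have h1 : (i • F) (F x) - F x ∈ (frobSub F).range := ih (F x)
    have h2 : F x - x ∈ (frobSub F).range := ⟨x, rfl⟩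
    have h3 := (frobSub F).range.add_mem h1 h2
    have hp : ((i + 1) • F) x = (i • F) (F x) := by
      rw [succ_nsmul]; rfl
    rw [hp]
    simpa using h3

/-- the norm element -/
noncomputable def nmEl (n : ℕ) (x : N) : N := ∑ i ∈ Finset.range n, (i • F) x

lemma nm_sub_nsmul_mem_range (n : ℕ) (x : N) :
    nmEl F n x - n • x ∈ (frobSub F).range := by
  have : nmEl F n x - n • x = ∑ i ∈ Finset.range n, ((i • F) x - x) := by
    rw [Finset.sum_sub_distrib, Finset.sum_const, Finset.card_range]; rfl
  rw [this]
  exact AddSubgroup.sum_mem _ fun i _ => pow_sub_mem_range F i x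

lemma map_nmEl (n : ℕ) (hFn : n • F = 0) (x : N) : F (nmEl F n x) = nmEl F n x := by
  have h : F (nmEl F n x) = ∑ i ∈ Finset.range n, ((i + 1) • F) x := by
    unfold nmEl
    rw [map_sum]
    refine Finset.sum_congr rfl fun i _ => ?_
    rw [succ_nsmul']; rfl
  have e1 : (∑ i ∈ Finset.range n, ((i + 1) • F) x) + ((0 : ℕ) • F) x
      = ∑ i ∈ Finset.range (n + 1), (i • F) x :=
    (Finset.sum_range_succ' (fun i => (i • F) x) n).symm
  have e2 : ∑ i ∈ Finset.range (n + 1), (i • F) x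
      = (∑ i ∈ Finset.range n, (i • F) x) + (n • F) x :=
    Finset.sum_range_succ (fun i => (i • F) x) n
  have hnx : (n • F) x = x := by rw [hFn]; rfl
  have h0x : ((0 : ℕ) • F) x = x := rfl
  rw [hnx] at e2
  rw [h0x] at e1
  have := e1.trans e2
  rw [h, nmEl]
  exact add_right_cancel this

lemma nmEl_mem_invariants (n : ℕ) (hFn : n • F = 0) (x : N) :
    nmEl F n x ∈ invariantsOf F := by
  show frobSub F (nmEl F n x) = 0
  rw [frobSub_apply, map_nmEl F n hFn, sub_self]

lemma nmEl_of_invariant (n : ℕ) {x : N} (hx : x ∈ invariantsOf F) :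
    nmEl F n x = n • x := by
  have hFx : F x = x := by
    have : frobSub F x = 0 := hx
    rw [frobSub_apply, sub_eq_zero] at this; exact this
  have hFi : ∀ i : ℕ, (i • F) x = x := by
    intro i
    induction i with
    | zero => rfl
    | succ i ih => rw [succ_nsmul]; show (i • F) (F x) = x; rw [hFx, ih]
  unfold nmEl
  rw [Finset.sum_congr rfl fun i _ => hFi i, Finset.sum_const, Finset.card_range]

lemma nmEl_frobSub (n : ℕ) (hFn : n • F = 0) (y : N) :
    nmEl F n (frobSub F y) = 0 := by
  unfold nmEl
  rw [frobSub_apply]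
  have : ∀ i : ℕ, (i • F) (F y - y) = ((i + 1) • F) y - (i • F) y := by
    intro i
    rw [map_sub, succ_nsmul]
    rfl
  rw [Finset.sum_congr rfl fun i _ => this i]
  refine (Finset.sum_range_sub (fun i => (i • F) y) n).trans ?_
  rw [hFn]
  simp

end Aux

/-- Every prime divisor of `ω` divides `n`, the exact order of `F`. -/
theorem prime_dvd_omega_dvd_order {N : Type*} [AddCommGroup N]
    [Module.Free ℤ N] [Module.Finite ℤ N]
    (F : AddAut N) (n : ℕ) (hn : 1 ≤ n) (hord : addOrderOf F = n) :
    ∀ p : ℕ, p.Prime → p ∣ omegaOf F → p ∣ n := by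
  intro p hp hpω
  have hFn : n • F = 0 := by rw [← hord]; exact addOrderOf_nsmul_eq_zero F
  -- kernel of β is trivial
  have hker : ∀ x : ↥(invariantsOf F), betaHom F x = 0 → x = 0 := by
    intro ⟨x, hx⟩ hβ
    have : (x : N) ∈ (frobSub F).range := by
      rwa [betaHom, AddMonoidHom.comp_apply, QuotientAddGroup.mk'_apply,
        QuotientAddGroup.eq_zero_iff] at hβ
    obtain ⟨y, hy⟩ := this
    have h1 : nmEl F n x = 0 := by rw [← hy]; exact nmEl_frobSub F n hFn y
    have h2 : nmEl F n x = n • x := nmEl_of_invariant F n hx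
    have hx0 : n • x = 0 := by rw [← h2, h1]
    have : (n : ℤ) • x = 0 := by rwa [natCast_zsmul]
    have hn0 : (n : ℤ) ≠ 0 := by exact_mod_cast (by omega : n ≠ 0)
    have hx00 : x = 0 := by
      rcases smul_eq_zero.mp this with h | h
      · exact absurd h hn0
      · exact h
    exact Subtype.ext hx00
  have hkercard : Nat.card ↥(betaHom F).ker = 1 := by
    have : ∀ x : ↥(betaHom F).ker, x = 0 := by
      rintro ⟨x, hx⟩
      exact Subtype.ext (hker x hx)
    have : Subsingleton ↥(betaHom F).ker := ⟨fun a b => by rw [this a, this b]⟩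
    exact Nat.card_eq_one_iff_unique.mpr ⟨this, ⟨0⟩⟩
  -- coker killed by n
  have hcoker : ∀ q : betaCoker F, n • q = 0 := by
    intro q
    obtain ⟨q', rfl⟩ := QuotientAddGroup.mk'_surjective _ q
    obtain ⟨x, rfl⟩ := QuotientAddGroup.mk'_surjective _ q'
    rw [← map_nsmul, ← map_nsmul, QuotientAddGroup.mk'_apply, QuotientAddGroup.mk'_apply,
      QuotientAddGroup.eq_zero_iff]
    have key : (QuotientAddGroup.mk (n • x) : coinvariantsOf F) =
        QuotientAddGroup.mk (nmEl F n x) := by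
      rw [QuotientAddGroup.eq]
      simpa [neg_add_eq_sub] using nm_sub_nsmul_mem_range F n x
    refine ⟨⟨nmEl F n x, nmEl_mem_invariants F n hFn x⟩, ?_⟩
    rw [betaHom, AddMonoidHom.comp_apply, QuotientAddGroup.mk'_apply]
    show _ = QuotientAddGroup.mk (n • x)
    exact key.symm
  -- coker is finite
  have : AddGroup.FG N := Module.Finite.iff_addGroup_fg.mp ‹_›
  have hfin : Finite (betaCoker F) := by
    apply AddCommGroup.finite_of_fg_torsion
    intro g
    exact isOfFinAddOrder_iff_nsmul_eq_zero.mpr ⟨n, hn, hcoker g⟩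
  have : Fintype (betaCoker F) := Fintype.ofFinite _
  have hω : omegaOf F = Nat.card (betaCoker F) := by
    rw [omegaOf, hkercard, Nat.div_one]
  rw [hω] at hpω
  rw [Nat.card_eq_fintype_card] at hpω
  haveI := Fact.mk hp
  obtain ⟨g, hg⟩ := exists_prime_addOrderOf_dvd_card p hpω
  have : addOrderOf g ∣ n := addOrderOf_dvd_of_nsmul_eq_zero (hcoker g)
  rwa [hg] at this
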